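/- Let m > 1, 1 ≤ p < m, let σ be a real number with σ(m−1) + 2(p−1) > 0, let N ≥ 1 be an integer, and set α = (σ+2)/(σ(m−1)+2(p−1)), β = (m−p)/(σ(m−1)+2(p−1)), X₂ = (m−1)/(2α(mN−N+2)), Y₂ = 1/(α(mN−N+2)). Let T ∈ (0,∞], and let (X,Y,Z) : [0,T) → ℝ³ be differentiable and satisfy X' = X((m−1)Y − 2X), Y' = −Y² − (β/α)Y + X − N X Y − X Z, Z' = Z((p−1)Y + σX) on [0,T), with X(t) ≥ 0 and Z(t) ≥ 0 for all t ∈ [0,T). If X(0) < X₂ and Y(0) < Y₂, then X(t) < X₂ and Y(t) < Y₂ for all t ∈ [0,T). -/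

import Mathlib

open Set Filter

set_option maxHeartbeats 1000000 in
/-- Lemma 5.1: the region {X < X₂, Y < Y₂} is positively invariant for the
dynamical system X' = X((m-1)Y - 2X), Y' = -Y² - (β/α)Y + X - NXY - XZ,
Z' = Z((p-1)Y + σX), for solutions with X ≥ 0 and Z ≥ 0 on [0,T), T ∈ (0,∞]. -/
theorem region_below_P2_invariant (m p σ : ℝ) (N : ℕ)
    (hm : 1 < m) (hp1 : 1 ≤ p) (hpm : p < m)
    (hL : 0 < σ * (m - 1) + 2 * (p - 1)) (hN : 1 ≤ N)
    (α β X₂ Y₂ : ℝ)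
    (hα : α = (σ + 2) / (σ * (m - 1) + 2 * (p - 1)))
    (hβ : β = (m - p) / (σ * (m - 1) + 2 * (p - 1)))
    (hX₂ : X₂ = (m - 1) / (2 * α * (m * (N : ℝ) - (N : ℝ) + 2)))
    (hY₂ : Y₂ = 1 / (α * (m * (N : ℝ) - (N : ℝ) + 2)))
    (T : EReal) (hT : 0 < T)
    (X Y Z : ℝ → ℝ)
    (hX : ∀ t : ℝ, 0 ≤ t → (t : EReal) < T →
      HasDerivWithinAt X (X t * ((m - 1) * Y t - 2 * X t))
        {s : ℝ | 0 ≤ s ∧ (s : EReal) < T} t)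
    (hY : ∀ t : ℝ, 0 ≤ t → (t : EReal) < T →
      HasDerivWithinAt Y
        (-(Y t) ^ 2 - (β / α) * Y t + X t - (N : ℝ) * X t * Y t - X t * Z t)
        {s : ℝ | 0 ≤ s ∧ (s : EReal) < T} t)
    (hZ : ∀ t : ℝ, 0 ≤ t → (t : EReal) < T →
      HasDerivWithinAt Z (Z t * ((p - 1) * Y t + σ * X t))
        {s : ℝ | 0 ≤ s ∧ (s : EReal) < T} t)
    (hXnn : ∀ t : ℝ, 0 ≤ t → (t : EReal) < T → 0 ≤ X t)
    (hZnn : ∀ t : ℝ, 0 ≤ t → (t : EReal) < T → 0 ≤ Z t)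
    (hX0 : X 0 < X₂) (hY0 : Y 0 < Y₂) :
    ∀ t : ℝ, 0 ≤ t → (t : EReal) < T → X t < X₂ ∧ Y t < Y₂ := by

  have hm1 : (0:ℝ) < m - 1 := by linarith
  have hσ2 : (0:ℝ) < σ + 2 := by
    by_contra h
    push_neg at h
    nlinarith [mul_nonneg (neg_nonneg.2 h) hm1.le]
  have hNr : (1:ℝ) ≤ (N:ℝ) := by exact_mod_cast hN
  have hN0 : (0:ℝ) ≤ (N:ℝ) := by linarith
  have hK : (0:ℝ) < m * N - N + 2 := by nlinarith [mul_nonneg hN0 hm1.le]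
  have hα0 : 0 < α := by rw [hα]; exact div_pos hσ2 hL
  have hαK : 0 < α * (m * N - N + 2) := mul_pos hα0 hK
  have hY₂0 : 0 < Y₂ := by rw [hY₂]; positivity
  have hX₂0 : 0 < X₂ := by
    rw [hX₂]
    exact div_pos hm1 (by positivity)
  have hβα : 0 ≤ β / α := by
    rw [hβ]
    exact div_nonneg (div_nonneg (by linarith) hL.le) hα0.le
  have hLne : σ * (m - 1) + 2 * (p - 1) ≠ 0 := ne_of_gt hL
  have hKne : m * N - N + 2 ≠ 0 := ne_of_gt hK
  have hσne : σ + 2 ≠ 0 := ne_of_gt hσ2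
  have hαne : α ≠ 0 := ne_of_gt hα0
  have hI1 : (m - 1) * Y₂ = 2 * X₂ := by
    rw [hX₂, hY₂]
    field_simp
  have hI2 : -Y₂ ^ 2 - β / α * Y₂ + X₂ - (N:ℝ) * X₂ * Y₂ = 0 := by
    rw [hX₂, hY₂, hα, hβ]
    field_simp
    ring
  have hNY : (N:ℝ) * Y₂ ≤ 1 := by
    rw [hY₂, mul_one_div, div_le_one hαK, hα, div_mul_eq_mul_div, le_div_iff₀ hL]
    nlinarith [mul_nonneg hN0 (by linarith : (0:ℝ) ≤ m - p)]
  set C : ℝ := 2 * X₂ + 2 * Y₂ + β / α + N * X₂ with hCdef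
  have hNX₂ : 0 ≤ (N:ℝ) * X₂ := mul_nonneg hN0 hX₂0.le
  have hC2X : 2 * X₂ ≤ C := by rw [hCdef]; linarith
  by_contra hcon
  push_neg at hcon
  obtain ⟨a, ha0, haT, hbad⟩ := hcon
  have hbad' : X₂ ≤ X a ∨ Y₂ ≤ Y a := by
    by_cases h : X a < X₂
    · exact Or.inr (hbad h)
    · exact Or.inl (le_of_not_gt h)
  have hsub : ∀ s : ℝ, s ∈ Icc 0 a → (0 ≤ s ∧ (s : EReal) < T) := fun s hs =>
    ⟨hs.1, lt_of_le_of_lt (EReal.coe_le_coe_iff.2 hs.2) haT⟩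
  have hsubS : Icc 0 a ⊆ {s : ℝ | 0 ≤ s ∧ (s : EReal) < T} := fun s hs => hsub s hs
  have hXc : ContinuousOn X (Icc 0 a) := fun t ht =>
    (((hX t (hsub t ht).1 (hsub t ht).2).mono hsubS).continuousWithinAt)
  have hYc : ContinuousOn Y (Icc 0 a) := fun t ht =>
    (((hY t (hsub t ht).1 (hsub t ht).2).mono hsubS).continuousWithinAt)
  set A : Set ℝ := (Icc 0 a ∩ X ⁻¹' Ici X₂) ∪ (Icc 0 a ∩ Y ⁻¹' Ici Y₂) with hAdef
  have hAclosed : IsClosed A :=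
    (hXc.preimage_isClosed_of_isClosed isClosed_Icc isClosed_Ici).union
      (hYc.preimage_isClosed_of_isClosed isClosed_Icc isClosed_Ici)
  have haA : a ∈ A := by
    rcases hbad' with h | h
    · exact Or.inl ⟨⟨ha0, le_refl a⟩, h⟩
    · exact Or.inr ⟨⟨ha0, le_refl a⟩, h⟩
  have hAne : A.Nonempty := ⟨a, haA⟩
  have hAbdd : BddBelow A := ⟨0, fun t ht => by
    rcases ht with ⟨h, _⟩ | ⟨h, _⟩ <;> exact h.1⟩
  set t₀ := sInf A with ht₀def
  have ht₀A : t₀ ∈ A := hAclosed.csInf_mem hAne hAbdd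
  have ht₀Icc : t₀ ∈ Icc 0 a := by
    rcases ht₀A with ⟨h, _⟩ | ⟨h, _⟩ <;> exact h
  have ht₀disj : X₂ ≤ X t₀ ∨ Y₂ ≤ Y t₀ := by
    rcases ht₀A with ⟨_, h⟩ | ⟨_, h⟩
    · exact Or.inl h
    · exact Or.inr h
  have ht₀pos : 0 < t₀ := by
    rcases lt_or_eq_of_le ht₀Icc.1 with h | h
    · exact h
    · exfalso
      rcases ht₀disj with h2 | h2 <;> rw [← h] at h2 <;> linarith
  have hlt : ∀ t, t ∈ Ico 0 t₀ → X t < X₂ ∧ Y t < Y₂ := by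
    intro t ht
    by_contra h
    have h' : X₂ ≤ X t ∨ Y₂ ≤ Y t := by
      by_cases h1 : X t < X₂
      · refine Or.inr ?_
        by_contra h2
        exact h ⟨h1, lt_of_not_ge h2⟩
      · exact Or.inl (le_of_not_gt h1)
    have htIcc : t ∈ Icc 0 a := ⟨ht.1, le_trans ht.2.le ht₀Icc.2⟩
    have htA : t ∈ A := by
      rcases h' with h2 | h2
      · exact Or.inl ⟨htIcc, h2⟩
      · exact Or.inr ⟨htIcc, h2⟩
    exact absurd (csInf_le hAbdd htA) (not_le.2 ht.2)
  -- Gronwall setup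
  have hIccsub : Icc (0:ℝ) t₀ ⊆ Icc 0 a := Icc_subset_Icc le_rfl ht₀Icc.2
  have hmemIoo : ∀ t, t ∈ Ioo (0:ℝ) t₀ →
      {s : ℝ | 0 ≤ s ∧ (s : EReal) < T} ∈ nhds t := by
    intro t ht
    refine mem_nhds_iff.2 ⟨Ioo 0 a, fun s hs => hsubS ⟨hs.1.le, hs.2.le⟩, isOpen_Ioo,
      ⟨ht.1, lt_of_lt_of_le ht.2 ht₀Icc.2⟩⟩
  have hexpC : Continuous fun s : ℝ => Real.exp (C * s) :=
    Real.continuous_exp.comp (continuous_const.mul continuous_id)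
  have hexpD : ∀ t : ℝ, HasDerivAt (fun s : ℝ => Real.exp (C * s)) (Real.exp (C * t) * C) t := by
    intro t
    simpa using ((hasDerivAt_id t).const_mul C).exp
  -- the X part
  have hgmono : MonotoneOn (fun s => Real.exp (C * s) * (X₂ - X s)) (Icc 0 t₀) := by
    apply monotoneOn_of_deriv_nonneg (convex_Icc 0 t₀)
    · exact (hexpC.continuousOn).mul (continuousOn_const.sub (hXc.mono hIccsub))
    · intro t ht
      rw [interior_Icc] at ht
      have hXd : HasDerivAt X (X t * ((m - 1) * Y t - 2 * X t)) t :=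
        (hX t ht.1.le (hsub t (hIccsub ⟨ht.1.le, ht.2.le⟩)).2).hasDerivAt (hmemIoo t ht)
      exact (((hexpD t).mul ((hasDerivAt_const t X₂).sub hXd)).differentiableAt).differentiableWithinAt
    · intro t ht
      rw [interior_Icc] at ht
      have hXd : HasDerivAt X (X t * ((m - 1) * Y t - 2 * X t)) t :=
        (hX t ht.1.le (hsub t (hIccsub ⟨ht.1.le, ht.2.le⟩)).2).hasDerivAt (hmemIoo t ht)
      have hgd := (hexpD t).mul ((hasDerivAt_const t X₂).sub hXd)
      rw [show (fun s => Real.exp (C * s) * (X₂ - X s)) = (fun s => Real.exp (C * s)) * ((fun x => X₂) - X) from rfl, hgd.deriv]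
      simp only [Pi.sub_apply]
      have hXt0 : 0 ≤ X t := hXnn t ht.1.le (hsub t (hIccsub ⟨ht.1.le, ht.2.le⟩)).2
      obtain ⟨hxlt, hylt⟩ := hlt t ⟨ht.1.le, ht.2⟩
      have hA' : X t * ((m - 1) * Y t - 2 * X t) ≤ C * (X₂ - X t) := by
        have hI1X : X t * ((m - 1) * Y₂) = X t * (2 * X₂) := by rw [hI1]
        nlinarith [mul_nonneg (mul_nonneg hm1.le hXt0) (by linarith : (0:ℝ) ≤ Y₂ - Y t),
          sq_nonneg (X₂ - X t),
          mul_nonneg (by linarith : (0:ℝ) ≤ C - 2 * X₂) (by linarith : (0:ℝ) ≤ X₂ - X t)]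
      have hep := Real.exp_pos (C * t)
      nlinarith [mul_le_mul_of_nonneg_left hA' hep.le]
  -- the Y part
  have hhmono : MonotoneOn (fun s => Real.exp (C * s) * (Y₂ - Y s)) (Icc 0 t₀) := by
    apply monotoneOn_of_deriv_nonneg (convex_Icc 0 t₀)
    · exact (hexpC.continuousOn).mul (continuousOn_const.sub (hYc.mono hIccsub))
    · intro t ht
      rw [interior_Icc] at ht
      have hYd : HasDerivAt Y
          (-(Y t) ^ 2 - (β / α) * Y t + X t - (N : ℝ) * X t * Y t - X t * Z t) t :=
        (hY t ht.1.le (hsub t (hIccsub ⟨ht.1.le, ht.2.le⟩)).2).hasDerivAt (hmemIoo t ht)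
      exact (((hexpD t).mul ((hasDerivAt_const t Y₂).sub hYd)).differentiableAt).differentiableWithinAt
    · intro t ht
      rw [interior_Icc] at ht
      have hYd : HasDerivAt Y
          (-(Y t) ^ 2 - (β / α) * Y t + X t - (N : ℝ) * X t * Y t - X t * Z t) t :=
        (hY t ht.1.le (hsub t (hIccsub ⟨ht.1.le, ht.2.le⟩)).2).hasDerivAt (hmemIoo t ht)
      have hgd := (hexpD t).mul ((hasDerivAt_const t Y₂).sub hYd)
      rw [show (fun s => Real.exp (C * s) * (Y₂ - Y s)) = (fun s => Real.exp (C * s)) * ((fun x => Y₂) - Y) from rfl, hgd.deriv]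
      simp only [Pi.sub_apply]
      have hXt0 : 0 ≤ X t := hXnn t ht.1.le (hsub t (hIccsub ⟨ht.1.le, ht.2.le⟩)).2
      have hZt0 : 0 ≤ Z t := hZnn t ht.1.le (hsub t (hIccsub ⟨ht.1.le, ht.2.le⟩)).2
      obtain ⟨hxlt, hylt⟩ := hlt t ⟨ht.1.le, ht.2⟩
      have hB' : -(Y t) ^ 2 - (β / α) * Y t + X t - (N : ℝ) * X t * Y t - X t * Z t
          ≤ C * (Y₂ - Y t) := by
        have h1 : (0:ℝ) ≤ (Y₂ - Y t) * (2 * X₂ + (Y₂ - Y t) + N * (X₂ - X t)) := by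
          have := mul_nonneg hN0 (by linarith : (0:ℝ) ≤ X₂ - X t)
          exact mul_nonneg (by linarith) (by linarith)
        have h2 : (0:ℝ) ≤ (X₂ - X t) * (1 - N * Y₂) :=
          mul_nonneg (by linarith) (by linarith)
        have h3 : (0:ℝ) ≤ X t * Z t := mul_nonneg hXt0 hZt0
        nlinarith [h1, h2, h3, hI2]
      have hep := Real.exp_pos (C * t)
      nlinarith [mul_le_mul_of_nonneg_left hB' hep.le]
  -- conclude
  have h0mem : (0:ℝ) ∈ Icc (0:ℝ) t₀ := ⟨le_rfl, ht₀pos.le⟩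
  have ht₀mem : t₀ ∈ Icc (0:ℝ) t₀ := ⟨ht₀pos.le, le_rfl⟩
  have hgX := hgmono h0mem ht₀mem ht₀pos.le
  have hgY := hhmono h0mem ht₀mem ht₀pos.le
  simp only [mul_zero, Real.exp_zero, one_mul] at hgX hgY
  have hepX := Real.exp_pos (C * t₀)
  have hXfin : X t₀ < X₂ := by nlinarith
  have hYfin : Y t₀ < Y₂ := by nlinarith
  rcases ht₀disj with h | h <;> linarith
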